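/- Every digraph without directed cycles of odd length is majority 2-choosable. -/

import Mathlib

open scoped Classical

variable {V : Type*} [Fintype V]

/-- The out-neighborhood of `v` in the digraph on `V` with edge relation `E`. -/
noncomputable def outNbrs (E : V → V → Prop) (v : V) : Finset V :=
  Finset.univ.filter (fun w => E v w)

/-- The in-neighborhood of `v` in the digraph on `V` with edge relation `E`. -/
noncomputable def inNbrs (E : V → V → Prop) (v : V) : Finset V :=
  Finset.univ.filter (fun w => E w v)

/-- `c` is a majority coloring of the digraph `(V, E)`: every vertex `v` has at
most `d⁺(v)/2` out-neighbors `w` with `c w = c v`. -/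
def IsMajorityColoring {α : Type*} (E : V → V → Prop) (c : V → α) : Prop :=
  ∀ v : V, 2 * ((outNbrs E v).filter (fun w => c w = c v)).card ≤ (outNbrs E v).card

/-- `l` is the vertex list of a directed cycle: a nonempty list of pairwise
distinct vertices in which each vertex has an edge to the next one, and the
last vertex has an edge back to the first one. -/
def IsDiCycle (E : V → V → Prop) (l : List V) : Prop :=
  l ≠ [] ∧ l.Nodup ∧ l.Chain' E ∧
    ∃ a b, l.head? = some a ∧ l.getLast? = some b ∧ E b a

/-- All vertices of the list `l` get the same color under `c`. -/
def MonochromaticList {α : Type*} (c : V → α) (l : List V) : Prop :=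
  ∀ u ∈ l, ∀ w ∈ l, c u = c w

/-- The digraph `(V, E)` is majority `k`-choosable: for every assignment of
lists of size at least `k` to the vertices there is a majority coloring
choosing each vertex's color from its list. -/
def MajorityChoosable (E : V → V → Prop) (k : ℕ) : Prop :=
  ∀ L : V → Finset ℕ, (∀ v, k ≤ (L v).card) →
    ∃ c : V → ℕ, (∀ v, c v ∈ L v) ∧ IsMajorityColoring E c

section MajorityProofAux

set_option linter.unusedSectionVars false
set_option maxHeartbeats 1000000

lemma exists_dup_split {α : Type*} {l : List α} (h : ¬ l.Nodup) :
    ∃ (x : α) (l₁ l₂ l₃ : List α), l = l₁ ++ x :: l₂ ++ x :: l₃ := by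
  induction l with
  | nil => simp at h
  | cons a t ih =>
    by_cases ha : a ∈ t
    · obtain ⟨t₁, t₂, rfl⟩ := List.append_of_mem ha
      exact ⟨a, [], t₁, t₂, by simp⟩
    · have ht : ¬ t.Nodup := fun hn => h (List.nodup_cons.mpr ⟨ha, hn⟩)
      obtain ⟨x, l₁, l₂, l₃, rfl⟩ := ih ht
      exact ⟨x, a :: l₁, l₂, l₃, by simp⟩

lemma getLast?_append_right {α : Type*} {l₁ l₂ : List α} {a : α}
    (h : l₂.getLast? = some a) : (l₁ ++ l₂).getLast? = some a := by
  simp [List.getLast?_append, h]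

lemma even_cycle_list (E : V → V → Prop)
    (hodd : ¬ ∃ l : List V, IsDiCycle E l ∧ Odd l.length)
    (F : V → V → Prop) (hFE : ∀ a b, F a b → E a b) :
    ∀ (n : ℕ) (l : List V), l.length ≤ n → l ≠ [] → l.Chain' F →
      (∀ a ∈ l.head?, ∀ b ∈ l.getLast?, F b a) → Even l.length := by
  intro n
  induction n with
  | zero =>
    intro l hlen hne _ _
    cases l with
    | nil => exact absurd rfl hne
    | cons a t => simp at hlen
  | succ n ih =>
    intro l hlen hne hchain hwrap
    by_cases hnd : l.Nodup
    · have hch : l.Chain' E := List.IsChain.imp hFE hchain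
      obtain ⟨a, ha⟩ : ∃ a, l.head? = some a := by
        cases l with
        | nil => exact absurd rfl hne
        | cons u t => exact ⟨u, rfl⟩
      obtain ⟨b, hb⟩ : ∃ b, l.getLast? = some b := by
        rw [List.getLast?_eq_getLast hne]; exact ⟨_, rfl⟩
      have hcyc : IsDiCycle E l :=
        ⟨hne, hnd, hch, a, b, ha, hb, hFE _ _ (hwrap a ha b hb)⟩
      have : ¬ Odd l.length := fun ho => hodd ⟨l, hcyc, ho⟩
      exact Nat.not_odd_iff_even.mp this
    · obtain ⟨x, l₁, l₂, l₃, rfl⟩ := exists_dup_split hnd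
      have hl : l₁ ++ x :: l₂ ++ x :: l₃ = l₁ ++ ((x :: l₂) ++ (x :: l₃)) := by simp
      rw [hl] at hchain hwrap hlen hne ⊢
      rw [List.Chain', List.isChain_append] at hchain
      obtain ⟨c1, cM, jxn1⟩ := hchain
      rw [List.isChain_append] at cM
      obtain ⟨cA, cB, jxn2⟩ := cM
      have hA : Even (x :: l₂).length := by
        refine ih (x :: l₂) ?_ (by simp) cA ?_
        · simp at hlen ⊢; omega
        · intro a ha b hb
          simp only [List.head?_cons, Option.mem_some_iff] at ha
          subst ha
          exact jxn2 b hb x (by simp)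
      have hB : Even ((x :: l₃) ++ l₁).length := by
        refine ih ((x :: l₃) ++ l₁) ?_ (by simp) ?_ ?_
        · simp at hlen ⊢; omega
        · rw [List.Chain', List.isChain_append]
          refine ⟨cB, c1, ?_⟩
          intro a ha b hb
          have hgl : (l₁ ++ ((x :: l₂) ++ (x :: l₃))).getLast? = some a :=
            getLast?_append_right (getLast?_append_right (by simpa using ha))
          have hhd : (l₁ ++ ((x :: l₂) ++ (x :: l₃))).head? = some b := by
            cases l₁ with
            | nil => simp at hb
            | cons u t =>
              simp only [List.head?_cons, Option.mem_some_iff] at hb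
              subst hb; rfl
          exact hwrap b hhd a hgl
        · intro a ha b hb
          have ha' : a = x := by
            rw [List.cons_append] at ha
            simp only [List.head?_cons, Option.mem_some_iff] at ha
            exact ha.symm
          rw [ha']
          cases hl₁ : l₁ with
          | nil =>
            have hgl : (l₁ ++ ((x :: l₂) ++ (x :: l₃))).getLast? = some b := by
              refine getLast?_append_right (getLast?_append_right ?_)
              rw [hl₁] at hb
              simpa using hb
            have hhd : (l₁ ++ ((x :: l₂) ++ (x :: l₃))).head? = some x := by
              rw [hl₁]; simp
            exact hwrap x hhd b hgl
          | cons u t =>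
            have hb' : b ∈ l₁.getLast? := by
              rw [hl₁] at hb ⊢
              have heq : ((x :: l₃) ++ (u :: t)).getLast? = (u :: t).getLast? := by
                rw [List.getLast?_append]
                rw [List.getLast?_eq_getLast (l := u :: t) (by simp)]
                simp
              rw [heq] at hb
              exact hb
            exact jxn1 b hb' x (by simp)
      have hlensum : (l₁ ++ ((x :: l₂) ++ (x :: l₃))).length
          = (x :: l₂).length + ((x :: l₃) ++ l₁).length := by
        simp; omega
      rw [hlensum]
      exact hA.add hB

def IsWalk (F : V → V → Prop) (a b : V) (l : List V) : Prop :=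
  (a :: l).Chain' F ∧ (a :: l).getLast? = some b

lemma isWalk_nil (F : V → V → Prop) (a : V) : IsWalk F a a [] :=
  ⟨List.isChain_singleton a, rfl⟩

lemma IsWalk.snoc {F : V → V → Prop} {a b c : V} {l : List V}
    (h : IsWalk F a b l) (hbc : F b c) : IsWalk F a c (l ++ [c]) := by
  obtain ⟨hch, hlast⟩ := h
  constructor
  · rw [show a :: (l ++ [c]) = (a :: l) ++ [c] by simp, List.Chain', List.isChain_append]
    refine ⟨hch, List.isChain_singleton c, ?_⟩
    intro p hp q hq
    simp only [List.head?_cons, Option.mem_some_iff] at hq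
    rw [hlast] at hp
    simp only [Option.mem_some_iff] at hp
    subst hp; subst hq; exact hbc
  · rw [show a :: (l ++ [c]) = (a :: l) ++ [c] by simp]
    exact List.getLast?_concat

lemma IsWalk.append {F : V → V → Prop} {a b : V} {l : List V}
    (h : IsWalk F a b l) : ∀ {c : V} {m : List V}, IsWalk F b c m → IsWalk F a c (l ++ m) := by
  intro c m
  induction m using List.reverseRecOn generalizing c with
  | nil =>
    intro hm
    obtain ⟨_, hlast⟩ := hm
    simp only [List.getLast?_singleton, Option.some_inj] at hlast
    subst hlast
    simpa using h
  | append_singleton m' d ih =>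
    intro hm
    obtain ⟨hch, hlast⟩ := hm
    have hd : c = d := by
      rw [show b :: (m' ++ [d]) = (b :: m') ++ [d] by simp, List.getLast?_concat] at hlast
      simpa using hlast.symm
    rw [hd]
    rw [show b :: (m' ++ [d]) = (b :: m') ++ [d] by simp, List.Chain', List.isChain_append] at hch
    obtain ⟨hch', _, hjxn⟩ := hch
    obtain ⟨b', hb'⟩ : ∃ b', (b :: m').getLast? = some b' := by
      rw [List.getLast?_eq_getLast (l := b :: m') (by simp)]; exact ⟨_, rfl⟩
    have hw' : IsWalk F b b' m' := ⟨hch', hb'⟩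
    have hFbd : F b' d := hjxn b' hb' d (by simp)
    have := (ih hw').snoc hFbd
    rwa [List.append_assoc] at this

lemma closed_walk_even (E : V → V → Prop)
    (hodd : ¬ ∃ l : List V, IsDiCycle E l ∧ Odd l.length)
    (F : V → V → Prop) (hFE : ∀ a b, F a b → E a b)
    {v : V} {l : List V} (hw : IsWalk F v v l) : Even l.length := by
  obtain ⟨hch, hlast⟩ := hw
  cases l with
  | nil => simp
  | cons b t =>
    set s : List V := v :: b :: t with hs
    have hsne : s ≠ [] := by simp [hs]
    have hslast : s.getLast hsne = v := by
      have := List.getLast?_eq_getLast hsne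
      rw [hlast] at this
      exact (Option.some_inj.mp this).symm
    have hdecomp : s.dropLast ++ [v] = s := by
      conv_rhs => rw [← List.dropLast_append_getLast hsne]
      rw [hslast]
    -- cyclic list is s.dropLast
    have hcne : s.dropLast ≠ [] := by
      simp [hs]
    have hchain' : s.dropLast.Chain' F := by
      rw [List.dropLast_eq_take]
      exact hch.take _
    have hjunction : ∀ q ∈ s.dropLast.getLast?, F q v := by
      have hch2 : (s.dropLast ++ [v]).Chain' F := by rw [hdecomp]; exact hch
      rw [List.Chain', List.isChain_append] at hch2
      intro q hq
      exact hch2.2.2 q hq v (by simp)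
    have hhead : s.dropLast.head? = some v := by
      simp [hs]
    have heven := even_cycle_list E hodd F hFE s.dropLast.length s.dropLast le_rfl hcne hchain'
      (by
        intro p hp q hq
        rw [hhead] at hp
        simp only [Option.mem_some_iff] at hp
        subst hp
        exact hjunction q hq)
    have hlen : s.dropLast.length = (b :: t).length := by
      simp [hs]
    rwa [hlen] at heven

lemma componentLemma (E : V → V → Prop)
    (L : V → Finset ℕ) (x y : V → ℕ)
    (hx : ∀ v, x v ∈ L v) (hy : ∀ v, y v ∈ L v) (hxy : ∀ v, x v < y v)
    (C : Finset V) (p : V → Bool)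
    (hp : ∀ u ∈ C, ∀ w ∈ C, E u w → p u ≠ p w)
    (g : V → ℕ → ℕ) (e : V → ℕ)
    (hge : ∀ v ∈ C, ∀ a b : ℕ, a ≠ b → g v a + g v b ≤ e v) :
    ∃ c : V → ℕ, (∀ v, c v ∈ L v) ∧ ∀ v ∈ C,
      2 * (((C.filter (fun w => E v w ∧ c w = c v)).card) + g v (c v))
        ≤ (C.filter (fun w => E v w)).card + e v := by
  classical
  set σt : V → ℕ := fun v => if p v then x v else y v with hσt
  set σf : V → ℕ := fun v => if p v then y v else x v with hσf
  have hσne : ∀ v, σt v ≠ σf v := by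
    intro v
    by_cases h : p v <;> simp only [hσt, hσf, h, if_true, if_false] <;>
      [exact (hxy v).ne; exact (hxy v).ne']
  have hσtL : ∀ v, σt v ∈ L v := by
    intro v; by_cases h : p v <;> simp only [hσt, h, if_true, if_false] <;>
      [exact hx v; exact hy v]
  have hσfL : ∀ v, σf v ∈ L v := by
    intro v; by_cases h : p v <;> simp only [hσf, h, if_true, if_false] <;>
      [exact hy v; exact hx v]
  have hanti : ∀ u ∈ C, ∀ w ∈ C, E u w → ¬(σt u = σt w ∧ σf u = σf w) := by
    intro u hu w hw hE hcon
    obtain ⟨h1, h2⟩ := hcon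
    have hpuw := hp u hu w hw hE
    have hxu := hxy u
    have hxw := hxy w
    cases hpu : p u <;> cases hpw : p w
    · exact hpuw (hpu.trans hpw.symm)
    · simp [hσt, hσf, hpu, hpw] at h1 h2
      omega
    · simp [hσt, hσf, hpu, hpw] at h1 h2
      omega
    · exact hpuw (hpu.trans hpw.symm)
  -- the monotone operator
  have hmono : Monotone (fun (s : V → Prop) => (fun v =>
      2 * (((C.filter (fun w => E v w ∧ (σt v = σt w ∨ (σt v = σf w ∧ ¬ s w)))).card)
        + g v (σt v)) ≤ (C.filter (fun w => E v w)).card + e v : V → Prop)) := by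
    intro s s' hss v hT
    have hsub : C.filter (fun w => E v w ∧ (σt v = σt w ∨ (σt v = σf w ∧ ¬ s' w)))
        ⊆ C.filter (fun w => E v w ∧ (σt v = σt w ∨ (σt v = σf w ∧ ¬ s w))) := by
      intro w hw
      rw [Finset.mem_filter] at hw ⊢
      obtain ⟨hwC, hEw, hq⟩ := hw
      refine ⟨hwC, hEw, ?_⟩
      rcases hq with hq | ⟨hq1, hq2⟩
      · exact Or.inl hq
      · exact Or.inr ⟨hq1, fun hsw => hq2 (hss w hsw)⟩
    have := Finset.card_le_card hsub
    omega
  set T : (V → Prop) →o (V → Prop) := ⟨_, hmono⟩ with hT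
  set s : V → Prop := OrderHom.lfp T with hs
  have hfix : T s = s := OrderHom.map_lfp T
  set c : V → ℕ := fun v => if s v then σt v else σf v with hc
  refine ⟨c, ?_, ?_⟩
  · intro v
    by_cases h : s v <;> simp only [hc, h, if_true, if_false, if_pos, if_neg, not_false_iff] <;>
      [exact hσtL v; exact hσfL v]
  intro v hv
  have hfixv : T s v ↔ s v := by rw [hfix]
  by_cases hsv : s v
  · -- c v = σt v, and T s v holds
    have hcv : c v = σt v := by simp only [hc, if_pos hsv]
    have hTv : 2 * (((C.filter (fun w => E v w ∧ (σt v = σt w ∨ (σt v = σf w ∧ ¬ s w)))).card)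
        + g v (σt v)) ≤ (C.filter (fun w => E v w)).card + e v := hfixv.mpr hsv
    have hsub : C.filter (fun w => E v w ∧ c w = c v)
        ⊆ C.filter (fun w => E v w ∧ (σt v = σt w ∨ (σt v = σf w ∧ ¬ s w))) := by
      intro w hw
      rw [Finset.mem_filter] at hw ⊢
      obtain ⟨hwC, hEw, hcw⟩ := hw
      refine ⟨hwC, hEw, ?_⟩
      rw [hcv] at hcw
      by_cases hsw : s w
      · simp only [hc, if_pos hsw] at hcw
        exact Or.inl hcw.symm
      · simp only [hc, if_neg hsw] at hcw
        exact Or.inr ⟨hcw.symm, hsw⟩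
    have hcard := Finset.card_le_card hsub
    have hgeq : g v (c v) = g v (σt v) := by rw [hcv]
    rw [hgeq]
    omega
  · -- c v = σf v, and ¬ T s v
    have hcv : c v = σf v := by simp only [hc, if_neg hsv]
    have hTv : ¬ (2 * (((C.filter (fun w => E v w ∧ (σt v = σt w ∨ (σt v = σf w ∧ ¬ s w)))).card)
        + g v (σt v)) ≤ (C.filter (fun w => E v w)).card + e v) := fun h => hsv (hfixv.mp h)
    -- disjointness
    have hdisj : Disjoint (C.filter (fun w => E v w ∧ c w = c v))
        (C.filter (fun w => E v w ∧ (σt v = σt w ∨ (σt v = σf w ∧ ¬ s w)))) := by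
      rw [Finset.disjoint_left]
      intro w hw1 hw2
      rw [Finset.mem_filter] at hw1 hw2
      obtain ⟨hwC, hEw, hcw⟩ := hw1
      obtain ⟨-, -, hq⟩ := hw2
      rw [hcv] at hcw
      by_cases hsw : s w
      · simp only [hc, if_pos hsw] at hcw
        -- σt w = σf v
        rcases hq with hq | ⟨hq1, hq2⟩
        · -- σt v = σt w = σf v
          exact hσne v (hq.trans hcw)
        · exact hq2 hsw
      · simp only [hc, if_neg hsw] at hcw
        -- σf w = σf v
        rcases hq with hq | ⟨hq1, hq2⟩
        · -- σt v = σt w and σf v = σf w : contradicts hanti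
          exact hanti v hv w hwC hEw ⟨hq, hcw.symm⟩
        · -- σt v = σf w = σf v
          exact hσne v (hq1.trans hcw)
    have hunion : (C.filter (fun w => E v w ∧ c w = c v))
        ∪ (C.filter (fun w => E v w ∧ (σt v = σt w ∨ (σt v = σf w ∧ ¬ s w))))
        ⊆ C.filter (fun w => E v w) := by
      intro w hw
      rw [Finset.mem_union, Finset.mem_filter, Finset.mem_filter] at hw
      rw [Finset.mem_filter]
      rcases hw with ⟨h1, h2, _⟩ | ⟨h1, h2, _⟩ <;> exact ⟨h1, h2⟩
    have hcards := Finset.card_union_of_disjoint hdisj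
    have hle := Finset.card_le_card hunion
    rw [hcards] at hle
    have hgbound : g v (σf v) + g v (σt v) ≤ e v := hge v hv _ _ (Ne.symm (hσne v))
    have hgeq : g v (c v) = g v (σf v) := by rw [hcv]
    rw [hgeq]
    omega

lemma mainLemma (E : V → V → Prop)
    (hodd : ¬ ∃ l : List V, IsDiCycle E l ∧ Odd l.length)
    (L : V → Finset ℕ) (x y : V → ℕ)
    (hx : ∀ v, x v ∈ L v) (hy : ∀ v, y v ∈ L v) (hxy : ∀ v, x v < y v) :
    ∀ (S : Finset V) (g : V → ℕ → ℕ) (e : V → ℕ),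
      (∀ v ∈ S, ∀ a b : ℕ, a ≠ b → g v a + g v b ≤ e v) →
      ∃ c : V → ℕ, (∀ v, c v ∈ L v) ∧ ∀ v ∈ S,
        2 * (((S.filter (fun w => E v w ∧ c w = c v)).card) + g v (c v))
          ≤ (S.filter (fun w => E v w)).card + e v := by
  intro S
  induction S using Finset.strongInduction with
  | _ S ih =>
  intro g e hge
  rcases S.eq_empty_or_nonempty with rfl | ⟨v₁, hv₁⟩
  · exact ⟨x, hx, fun v hv => absurd hv (Finset.notMem_empty v)⟩
  · set F : V → V → Prop := fun a b => a ∈ S ∧ b ∈ S ∧ E a b with hF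
    have hFE : ∀ a b, F a b → E a b := fun a b h => h.2.2
    set R : V → Finset V := fun v => S.filter (fun w => ∃ l, IsWalk F v w l) with hR
    obtain ⟨v₀, hv₀S, hv₀min⟩ := S.exists_min_image (fun v => (R v).card) ⟨v₁, hv₁⟩
    set C : Finset V := R v₀ with hCdef
    have hCS : C ⊆ S := Finset.filter_subset _ _
    have hv₀C : v₀ ∈ C := Finset.mem_filter.mpr ⟨hv₀S, ⟨[], isWalk_nil F v₀⟩⟩
    have hsink : ∀ u ∈ C, ∀ w ∈ S, E u w → w ∈ C := by
      intro u hu w hwS hE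
      obtain ⟨huS', l, hl⟩ := Finset.mem_filter.mp hu
      exact Finset.mem_filter.mpr ⟨hwS, ⟨l ++ [w], hl.snoc ⟨hCS hu, hwS, hE⟩⟩⟩
    have hmut : ∀ u ∈ C, ∀ w ∈ C, ∃ l, IsWalk F u w l := by
      intro u hu w hw
      have hRsub : R u ⊆ R v₀ := by
        intro t ht
        obtain ⟨htS, l, hl⟩ := Finset.mem_filter.mp ht
        obtain ⟨huS, m, hm⟩ := Finset.mem_filter.mp hu
        exact Finset.mem_filter.mpr ⟨htS, ⟨m ++ l, hm.append hl⟩⟩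
      have hEq : R u = R v₀ := Finset.eq_of_subset_of_card_le hRsub (hv₀min u (hCS hu))
      have hw' : w ∈ R u := by rw [hEq]; exact hw
      obtain ⟨hwS, l, hl⟩ := Finset.mem_filter.mp hw'
      exact ⟨l, hl⟩
    set p : V → Bool := fun w => if ∃ l, IsWalk F v₀ w l ∧ Even l.length then false else true
      with hpdef
    have huniq : ∀ w ∈ C, ∀ l₁ l₂ : List V, IsWalk F v₀ w l₁ → IsWalk F v₀ w l₂ →
        (Even l₁.length ↔ Even l₂.length) := by
      intro w hw l₁ l₂ h1 h2
      obtain ⟨m, hm⟩ := hmut w hw v₀ hv₀C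
      have e1 : Even (l₁ ++ m).length := closed_walk_even E hodd F hFE (h1.append hm)
      have e2 : Even (l₂ ++ m).length := closed_walk_even E hodd F hFE (h2.append hm)
      rw [List.length_append, Nat.even_add] at e1 e2
      tauto
    have hpwalk : ∀ w ∈ C, ∃ l, IsWalk F v₀ w l ∧ (Even l.length ↔ p w = false) := by
      intro w hw
      obtain ⟨hwS, l, hl⟩ := Finset.mem_filter.mp hw
      by_cases hEx : ∃ l', IsWalk F v₀ w l' ∧ Even l'.length
      · obtain ⟨l', hl', he'⟩ := hEx
        refine ⟨l', hl', ?_⟩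
        have : p w = false := by
          rw [hpdef]; simp only [if_pos]
          rw [if_pos ⟨l', hl', he'⟩]
        simp [this, he']
      · refine ⟨l, hl, ?_⟩
        have hne : ¬ Even l.length := fun he => hEx ⟨l, hl, he⟩
        have : p w = true := by
          rw [hpdef]; simp only
          rw [if_neg hEx]
        simp [this, hne]
    have hp : ∀ u ∈ C, ∀ w ∈ C, E u w → p u ≠ p w := by
      intro u hu w hw hE hpeq
      obtain ⟨lu, hlu, hliu⟩ := hpwalk u hu
      obtain ⟨lw, hlw, hliw⟩ := hpwalk w hw
      have hwalk2 : IsWalk F v₀ w (lu ++ [w]) := hlu.snoc ⟨hCS hu, hCS hw, hE⟩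
      have hiff := huniq w hw (lu ++ [w]) lw hwalk2 hlw
      rw [List.length_append, List.length_singleton, Nat.even_add_one] at hiff
      rw [hpeq] at hliu
      cases hpw : p w <;> rw [hpw] at hliu hliw <;> simp at hliu hliw
      · tauto
      · exact (Nat.not_even_iff_odd.mpr hliw) (hiff.mp (Nat.not_even_iff_odd.mpr hliu))
    -- color the sink component C
    obtain ⟨c₁, hc₁L, hc₁⟩ := componentLemma E L x y hx hy hxy C p hp g e
      (fun v hv => hge v (hCS hv))
    -- recurse on the rest
    set S' : Finset V := S \ C with hS'def
    have hSS' : S' ⊂ S := Finset.sdiff_ssubset hCS ⟨v₀, hv₀C⟩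
    set g' : V → ℕ → ℕ := fun v z => g v z + (C.filter (fun w => E v w ∧ c₁ w = z)).card
      with hg'def
    set e' : V → ℕ := fun v => e v + (C.filter (fun w => E v w)).card with he'def
    have hge' : ∀ v ∈ S', ∀ a b : ℕ, a ≠ b → g' v a + g' v b ≤ e' v := by
      intro v hv a b hab
      have hvS := (Finset.mem_sdiff.mp hv).1
      have h1 := hge v hvS a b hab
      have hdisj : Disjoint (C.filter (fun w => E v w ∧ c₁ w = a))
          (C.filter (fun w => E v w ∧ c₁ w = b)) := by
        rw [Finset.disjoint_left]
        intro w hw1 hw2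
        rw [Finset.mem_filter] at hw1 hw2
        exact hab (hw1.2.2.symm.trans hw2.2.2)
      have hsub : C.filter (fun w => E v w ∧ c₁ w = a) ∪ C.filter (fun w => E v w ∧ c₁ w = b)
          ⊆ C.filter (fun w => E v w) := by
        intro w hw
        simp only [Finset.mem_union, Finset.mem_filter] at hw
        rw [Finset.mem_filter]
        rcases hw with ⟨h1', h2', _⟩ | ⟨h1', h2', _⟩ <;> exact ⟨h1', h2'⟩
      have hcu := Finset.card_union_of_disjoint hdisj
      have hcle := Finset.card_le_card hsub
      rw [hcu] at hcle
      simp only [hg'def, he'def]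
      omega
    obtain ⟨c₂, hc₂L, hc₂⟩ := ih S' hSS' g' e' hge'
    set c : V → ℕ := fun v => if v ∈ C then c₁ v else c₂ v with hcdef
    have hcL : ∀ v, c v ∈ L v := by
      intro v; by_cases h : v ∈ C <;> simp only [hcdef, h, if_true, if_false] <;>
        [exact hc₁L v; exact hc₂L v]
    refine ⟨c, hcL, ?_⟩
    intro v hvS
    by_cases hvC : v ∈ C
    · have hcv : c v = c₁ v := if_pos hvC
      have hfe1 : S.filter (fun w => E v w ∧ c w = c v)
          = C.filter (fun w => E v w ∧ c₁ w = c₁ v) := by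
        ext w
        simp only [Finset.mem_filter]
        constructor
        · rintro ⟨hwS, hEw, hcw⟩
          have hwC : w ∈ C := hsink v hvC w hwS hEw
          refine ⟨hwC, hEw, ?_⟩
          rw [show c w = c₁ w from if_pos hwC, hcv] at hcw
          exact hcw
        · rintro ⟨hwC, hEw, hcw⟩
          refine ⟨hCS hwC, hEw, ?_⟩
          rw [show c w = c₁ w from if_pos hwC, hcv]
          exact hcw
      have hfe2 : S.filter (fun w => E v w) = C.filter (fun w => E v w) := by
        ext w
        simp only [Finset.mem_filter]
        exact ⟨fun ⟨hwS, hEw⟩ => ⟨hsink v hvC w hwS hEw, hEw⟩,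
          fun ⟨hwC, hEw⟩ => ⟨hCS hwC, hEw⟩⟩
      rw [hfe1, hfe2, show g v (c v) = g v (c₁ v) from by rw [hcv]]
      exact hc₁ v hvC
    · have hvS' : v ∈ S' := Finset.mem_sdiff.mpr ⟨hvS, hvC⟩
      have hcv : c v = c₂ v := if_neg hvC
      have hsplit1 : S.filter (fun w => E v w ∧ c w = c v)
          = C.filter (fun w => E v w ∧ c₁ w = c₂ v)
            ∪ S'.filter (fun w => E v w ∧ c₂ w = c₂ v) := by
        ext w
        simp only [hS'def, Finset.mem_filter, Finset.mem_union, Finset.mem_sdiff]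
        constructor
        · rintro ⟨hwS, hEw, hcw⟩
          rw [hcv] at hcw
          by_cases hwC : w ∈ C
          · left
            rw [show c w = c₁ w from if_pos hwC] at hcw
            exact ⟨hwC, hEw, hcw⟩
          · right
            rw [show c w = c₂ w from if_neg hwC] at hcw
            exact ⟨⟨hwS, hwC⟩, hEw, hcw⟩
        · rintro (⟨hwC, hEw, hcw⟩ | ⟨⟨hwS, hwC⟩, hEw, hcw⟩)
          · refine ⟨hCS hwC, hEw, ?_⟩
            rw [show c w = c₁ w from if_pos hwC, hcv]
            exact hcw
          · refine ⟨hwS, hEw, ?_⟩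
            rw [show c w = c₂ w from if_neg hwC, hcv]
            exact hcw
      have hsplit2 : S.filter (fun w => E v w)
          = C.filter (fun w => E v w) ∪ S'.filter (fun w => E v w) := by
        ext w
        simp only [hS'def, Finset.mem_filter, Finset.mem_union, Finset.mem_sdiff]
        constructor
        · rintro ⟨hwS, hEw⟩
          by_cases hwC : w ∈ C
          · exact Or.inl ⟨hwC, hEw⟩
          · exact Or.inr ⟨⟨hwS, hwC⟩, hEw⟩
        · rintro (⟨hwC, hEw⟩ | ⟨⟨hwS, hwC⟩, hEw⟩)
          · exact ⟨hCS hwC, hEw⟩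
          · exact ⟨hwS, hEw⟩
      have hdisj1 : Disjoint (C.filter (fun w => E v w ∧ c₁ w = c₂ v))
          (S'.filter (fun w => E v w ∧ c₂ w = c₂ v)) :=
        Finset.disjoint_filter_filter (Finset.disjoint_sdiff)
      have hdisj2 : Disjoint (C.filter (fun w => E v w)) (S'.filter (fun w => E v w)) :=
        Finset.disjoint_filter_filter (Finset.disjoint_sdiff)
      have hIH := hc₂ v hvS'
      have hg'v : g' v (c₂ v) = g v (c₂ v) + (C.filter (fun w => E v w ∧ c₁ w = c₂ v)).card := rfl
      have he'v : e' v = e v + (C.filter (fun w => E v w)).card := rfl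
      rw [hg'v, he'v] at hIH
      rw [hsplit1, hsplit2, Finset.card_union_of_disjoint hdisj1,
        Finset.card_union_of_disjoint hdisj2,
        show g v (c v) = g v (c₂ v) from by rw [hcv]]
      omega

end MajorityProofAux

/-- Every digraph without directed cycles of odd length is
majority `2`-choosable. -/
theorem majority_two_choosable_of_no_odd_dicycle
    {V : Type*} [Fintype V] (E : V → V → Prop) (hloopless : ∀ v : V, ¬ E v v)
    (hodd : ¬ ∃ l : List V, IsDiCycle E l ∧ Odd l.length) :
    MajorityChoosable E 2 := by
  intro L hL
  have hchoice : ∀ v : V, ∃ xy : ℕ × ℕ, xy.1 ∈ L v ∧ xy.2 ∈ L v ∧ xy.1 < xy.2 := by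
    intro v
    obtain ⟨a, ha, b, hb, hab⟩ := Finset.one_lt_card.mp (lt_of_lt_of_le one_lt_two (hL v))
    rcases lt_or_gt_of_ne hab with h | h
    · exact ⟨(a, b), ha, hb, h⟩
    · exact ⟨(b, a), hb, ha, h⟩
  choose xy hxm hym hxym using hchoice
  obtain ⟨c, hcL, hc⟩ := mainLemma E hodd L (fun v => (xy v).1) (fun v => (xy v).2)
    hxm hym hxym Finset.univ (fun _ _ => 0) (fun _ => 0)
    (by intro v _ a b _; simp)
  refine ⟨c, hcL, ?_⟩
  intro v
  have hv := hc v (Finset.mem_univ v)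
  simp only [add_zero] at hv
  simp only [outNbrs, Finset.filter_filter, Finset.filter_congr_decidable] at hv ⊢
  convert hv using 3
  ext w
  simp
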